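/- Let g : [0,T] → ℝ be continuous, and let K¹, K² : [0,T] → ℝ be continuous non-decreasing functions with K¹(0) = K²(0) = 0. Suppose that for i = 1,2 and all t ∈ [0,T]: h_i(t) := g(t) + K^i(T) − K^i(t) ≥ 0, and ∫₀ᵀ h_i(t) dK^i(t) = 0, where t ↦ h_i(t) is such that h₁(t) > h₂(t) whenever K¹(T)−K¹(t) > K²(T)−K²(t) (which holds automatically here since h₁ − h₂ = (K¹(T)−K¹(t)) − (K²(T)−K²(t))). Then K¹ = K². -/

import Mathlib

open MeasureTheory Set Filter Topology

lemma flat_key (T : ℝ) (g : ℝ → ℝ) (hg : Continuous g)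
    (K1 K2 : StieltjesFunction ℝ)
    (hK1c : Continuous ⇑K1) (hK2c : Continuous ⇑K2)
    (hpos1 : ∀ t ∈ Icc 0 T, 0 ≤ g t + K1 T - K1 t)
    (hpos2 : ∀ t ∈ Icc 0 T, 0 ≤ g t + K2 T - K2 t)
    (hflat1 : (∫ t in Icc 0 T, (g t + K1 T - K1 t) ∂K1.measure) = 0) :
    ∀ t ∈ Icc 0 T, K1 T - K1 t ≤ K2 T - K2 t := by
  intro t0 ht0
  by_contra hlt
  push_neg at hlt
  set μ := K1.measure.restrict (Icc 0 T) with hμ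
  have h1cont : Continuous (fun t => g t + K1 T - K1 t) := by fun_prop
  have hint : Integrable (fun t => g t + K1 T - K1 t) μ := h1cont.integrableOn_Icc
  have hnn : 0 ≤ᵐ[μ] (fun t => g t + K1 T - K1 t) :=
    ae_restrict_of_forall_mem measurableSet_Icc hpos1
  have hae : (fun t => g t + K1 T - K1 t) =ᵐ[μ] 0 :=
    (integral_eq_zero_iff_of_nonneg_ae hnn hint).mp hflat1
  have hzero : μ {t | g t + K1 T - K1 t ≠ 0} = 0 := by
    simpa [EventuallyEq, ae_iff] using hae
  set S := Icc t0 T ∩ {t | K1 T - K1 t ≤ K2 T - K2 t} with hS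
  have hTS : T ∈ S := ⟨⟨ht0.2, le_refl T⟩, by simp⟩
  have hSne : S.Nonempty := ⟨T, hTS⟩
  have hSbdd : BddBelow S := ⟨t0, fun x hx => hx.1.1⟩
  have hScl : IsClosed S :=
    isClosed_Icc.inter (isClosed_le (by fun_prop) (by fun_prop))
  set s := sInf S with hsdef
  have hsS : s ∈ S := hScl.csInf_mem hSne hSbdd
  have ht0s : t0 < s := by
    rcases lt_or_eq_of_le (le_csInf hSne fun x hx => hx.1.1) with h | h
    · exact h
    · have hmem : K1 T - K1 s ≤ K2 T - K2 s := hsS.2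
      rw [show s = t0 from hsdef.trans h.symm] at hmem
      exact absurd hmem (not_le.mpr hlt)
  have hsT : s ≤ T := hsS.1.2
  have hconst : ∀ b ∈ Ico t0 s, K1 b = K1 t0 := by
    intro b hb
    have hmeas : K1.measure (Ioc t0 b) = 0 := by
      have hsub : Ioc t0 b ⊆ Icc 0 T := fun t ht =>
        ⟨le_trans ht0.1 (le_of_lt ht.1), le_trans ht.2 (le_trans hb.2.le hsT)⟩
      have hre : K1.measure (Ioc t0 b) = μ (Ioc t0 b) := by
        rw [hμ, Measure.restrict_apply measurableSet_Ioc, inter_eq_self_of_subset_left hsub]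
      rw [hre]
      refine le_antisymm (le_trans (measure_mono ?_) hzero.le) (zero_le)
      intro t ht
      have htI : t ∈ Icc 0 T := hsub ht
      have htS : t ∉ S := fun hmem =>
        absurd (csInf_le hSbdd hmem) (not_le.mpr (lt_of_le_of_lt ht.2 hb.2))
      have htI2 : t ∈ Icc t0 T := ⟨ht.1.le, htI.2⟩
      have hD : K2 T - K2 t < K1 T - K1 t := by
        by_contra hc
        exact htS ⟨htI2, not_lt.mp hc⟩
      have h2nn := hpos2 t htI
      simp only [mem_setOf_eq]
      intro habs
      linarith
    rw [K1.measure_Ioc] at hmeas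
    have h0 := ENNReal.ofReal_eq_zero.mp hmeas
    have := K1.mono hb.1
    linarith
  have hK1s : K1 s = K1 t0 := by
    have hne : (𝓝[Ico t0 s] s).NeBot := by
      apply mem_closure_iff_nhdsWithin_neBot.mp
      rw [closure_Ico (ne_of_lt ht0s)]
      exact ⟨ht0s.le, le_refl s⟩
    have h1 : Tendsto (⇑K1) (𝓝[Ico t0 s] s) (𝓝 (K1 s)) :=
      (hK1c.tendsto s).mono_left nhdsWithin_le_nhds
    have h2 : Tendsto (⇑K1) (𝓝[Ico t0 s] s) (𝓝 (K1 t0)) := by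
      refine Tendsto.congr' ?_ tendsto_const_nhds
      filter_upwards [eventually_mem_nhdsWithin] with x hx
      exact (hconst x hx).symm
    exact tendsto_nhds_unique h1 h2
  have hfin : K1 T - K1 s ≤ K2 T - K2 s := hsS.2
  have hK2m : K2 t0 ≤ K2 s := K2.mono ht0s.le
  rw [hK1s] at hfin
  linarith

/-- Uniqueness of flat deterministic compensators: if two continuous non-decreasing
functions `K¹, K²` with `Kⁱ(0)=0` both make `hᵢ(t) = g(t) + Kⁱ(T) − Kⁱ(t)` non-negative
on `[0,T]` and both satisfy the Skorokhod condition `∫₀ᵀ hᵢ dKⁱ = 0`, then `K¹ = K²`. -/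
theorem flat_compensator_unique (T : ℝ) (hT : 0 < T)
    (g : ℝ → ℝ) (hg : Continuous g)
    (K1 K2 : StieltjesFunction ℝ)
    (hK1c : Continuous ⇑K1) (hK2c : Continuous ⇑K2)
    (hK10 : K1 0 = 0) (hK20 : K2 0 = 0)
    (hpos1 : ∀ t ∈ Icc 0 T, 0 ≤ g t + K1 T - K1 t)
    (hpos2 : ∀ t ∈ Icc 0 T, 0 ≤ g t + K2 T - K2 t)
    (hflat1 : (∫ t in Icc 0 T, (g t + K1 T - K1 t) ∂K1.measure) = 0)
    (hflat2 : (∫ t in Icc 0 T, (g t + K2 T - K2 t) ∂K2.measure) = 0) :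
    EqOn (⇑K1) (⇑K2) (Icc 0 T) := by
  have h12 := flat_key T g hg K1 K2 hK1c hK2c hpos1 hpos2 hflat1
  have h21 := flat_key T g hg K2 K1 hK2c hK1c hpos2 hpos1 hflat2
  have heq : ∀ t ∈ Icc 0 T, K1 T - K1 t = K2 T - K2 t :=
    fun t ht => le_antisymm (h12 t ht) (h21 t ht)
  have h0 : (0 : ℝ) ∈ Icc 0 T := ⟨le_refl 0, hT.le⟩
  have hTT : K1 T = K2 T := by
    have := heq 0 h0
    rw [hK10, hK20] at this
    linarith
  intro t ht
  have := heq t ht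
  linarith
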